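/- Let G be a connected graph on n vertices with minimum degree δ and complement G^c. If q1(G^c) < 2δ + 1, then G has a fractional perfect matching unless G is isomorphic to the join H1 ∨ H2, where H1 is an independent set of size δ + 1 and H2 is an arbitrary graph on δ vertices. -/

import Mathlib

open SimpleGraph Finset

/-- The signless Laplacian matrix `Q(G) = D(G) + A(G)` of a graph. -/
noncomputable def signlessLap {V : Type*} [Fintype V] [DecidableEq V]
    (G : SimpleGraph V) [DecidableRel G.Adj] : Matrix V V ℝ :=
  Matrix.diagonal (fun v => (G.degree v : ℝ)) + G.adjMatrix ℝ

/-- The signless Laplacian spectral radius: the largest eigenvalue of `Q(G)`. -/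
noncomputable def q1 {V : Type*} [Fintype V] [DecidableEq V]
    (G : SimpleGraph V) [DecidableRel G.Adj] : ℝ :=
  sSup (spectrum ℝ (signlessLap G))

/-- `f` is a fractional matching of `G`: it assigns each edge a weight in `[0,1]`
(and `0` to non-edges), with total weight at most `1` at each vertex. -/
def IsFracMatching {V : Type*} [Fintype V] [DecidableEq V]
    (G : SimpleGraph V) [DecidableRel G.Adj] (f : Sym2 V → ℝ) : Prop :=
  (∀ e ∈ G.edgeFinset, 0 ≤ f e ∧ f e ≤ 1) ∧
  (∀ e, e ∉ G.edgeFinset → f e = 0) ∧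
  (∀ v : V, ∑ e ∈ G.incidenceFinset v, f e ≤ 1)

/-- The fractional matching number of `G`. -/
noncomputable def fracMatchNum {V : Type*} [Fintype V] [DecidableEq V]
    (G : SimpleGraph V) [DecidableRel G.Adj] : ℝ :=
  sSup {x : ℝ | ∃ f, IsFracMatching G f ∧ x = ∑ e ∈ G.edgeFinset, f e}

/-- `G` has a fractional perfect matching: a fractional matching of total weight `n/2`. -/
def HasFracPerfectMatching {V : Type*} [Fintype V] [DecidableEq V]
    (G : SimpleGraph V) [DecidableRel G.Adj] : Prop :=
  ∃ f, IsFracMatching G f ∧ ∑ e ∈ G.edgeFinset, f e = (Fintype.card V : ℝ) / 2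

section FPMAux

open Matrix

variable {V : Type*} [Fintype V] [DecidableEq V]

lemma signlessLap_isHermitian' (G : SimpleGraph V) [DecidableRel G.Adj] :
    (signlessLap G).IsHermitian := by
  unfold Matrix.IsHermitian
  ext i j
  simp only [signlessLap, Matrix.conjTranspose_apply, Matrix.add_apply, star_trivial,
    Matrix.diagonal_apply, SimpleGraph.adjMatrix_apply]
  by_cases h : i = j
  · subst h; simp
  · simp [h, Ne.symm h, SimpleGraph.adj_comm]

/-- Rayleigh quotient bound for a symmetric real matrix. -/
lemma dotProduct_mulVec_le_sSup (A : Matrix V V ℝ) (hA : A.IsHermitian) (x : V → ℝ) (hx : x ≠ 0) :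
    x ⬝ᵥ (A *ᵥ x) ≤ sSup (spectrum ℝ A) * (x ⬝ᵥ x) := by
  have hne : Nonempty V := by
    by_contra h
    exact hx (funext fun v => absurd ⟨v⟩ h)
  set U : Matrix V V ℝ := (hA.eigenvectorUnitary : Matrix V V ℝ) with hUdef
  set lam : V → ℝ := hA.eigenvalues with hlam
  have hofReal : (RCLike.ofReal ∘ lam : V → ℝ) = lam := by
    funext i; simp
  have hU : A = U * Matrix.diagonal lam * Uᵀ := by
    conv_lhs => rw [hA.spectral_theorem]
    rw [hofReal, Unitary.conjStarAlgAut_apply, Matrix.star_eq_conjTranspose, Matrix.conjTranspose_eq_transpose_of_trivial]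
  have hUU : U * Uᵀ = 1 := by
    rw [← Matrix.conjTranspose_eq_transpose_of_trivial]
    exact hA.eigenvectorUnitary.2.2
  -- key1 : quadratic form in eigencoordinates
  have key1 : ∀ y : V → ℝ, y ⬝ᵥ (A *ᵥ y) = ∑ i, lam i * ((Uᵀ *ᵥ y) i)^2 := by
    intro y
    calc y ⬝ᵥ (A *ᵥ y) = y ⬝ᵥ (U *ᵥ (Matrix.diagonal lam *ᵥ (Uᵀ *ᵥ y))) := by
          rw [Matrix.mulVec_mulVec, Matrix.mulVec_mulVec, ← hU]
      _ = (Uᵀ *ᵥ y) ⬝ᵥ (Matrix.diagonal lam *ᵥ (Uᵀ *ᵥ y)) := by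
          rw [Matrix.dotProduct_mulVec, Matrix.mulVec_transpose]
      _ = ∑ i, lam i * ((Uᵀ *ᵥ y) i)^2 := by
          simp [dotProduct, Matrix.mulVec_diagonal]
          exact Finset.sum_congr rfl fun i _ => by ring
  have key2 : ∀ y : V → ℝ, y ⬝ᵥ y = ∑ i, ((Uᵀ *ᵥ y) i)^2 := by
    intro y
    have : y ⬝ᵥ y = y ⬝ᵥ ((U * Uᵀ) *ᵥ y) := by rw [hUU]; simp
    rw [this, ← Matrix.mulVec_mulVec, Matrix.dotProduct_mulVec, Matrix.mulVec_transpose]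
    simp [dotProduct]
    exact Finset.sum_congr rfl fun i _ => by ring
  -- the maximal eigenvalue
  obtain ⟨i0, hi0⟩ := Finset.exists_max_image Finset.univ lam ⟨Classical.arbitrary V, Finset.mem_univ _⟩
  set lmax := lam i0 with hlmax
  have hray : ∀ y : V → ℝ, y ⬝ᵥ (A *ᵥ y) ≤ lmax * (y ⬝ᵥ y) := by
    intro y
    rw [key1, key2, Finset.mul_sum]
    exact Finset.sum_le_sum fun i _ =>
      mul_le_mul_of_nonneg_right (hi0.2 i (Finset.mem_univ i)) (sq_nonneg _)
  have hbdd : ∀ μ ∈ spectrum ℝ A, μ ≤ lmax := by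
    intro μ hμ
    have hμ' : μ ∈ spectrum ℝ (Matrix.toEuclideanLin A) := by
      rwa [Matrix.spectrum_toEuclideanLin (A := A)]
    have hev : Module.End.HasEigenvalue (Matrix.toEuclideanLin A : Module.End ℝ (EuclideanSpace ℝ V)) μ := by
      rw [Module.End.hasEigenvalue_iff_mem_spectrum]
      exact hμ'
    obtain ⟨v, hv⟩ := hev.exists_hasEigenvector
    have hv1' : A *ᵥ (WithLp.equiv 2 (V → ℝ) v) = μ • (WithLp.equiv 2 (V → ℝ) v) := by
      have := congrArg (WithLp.equiv 2 (V → ℝ)) hv.apply_eq_smul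
      simpa using this
    set w : V → ℝ := WithLp.equiv 2 (V → ℝ) v with hw
    have hwne : w ≠ 0 := by
      intro h
      exact hv.2 (by simpa [hw] using congrArg (WithLp.equiv 2 (V → ℝ)).symm h)
    have hpos : 0 < w ⬝ᵥ w := by
      rcases Function.ne_iff.1 hwne with ⟨j, hj⟩
      have : (0:ℝ) < ∑ i, w i * w i := by
        apply Finset.sum_pos' (fun i _ => mul_self_nonneg _)
        exact ⟨j, Finset.mem_univ j, mul_self_pos.mpr hj⟩
      simpa [dotProduct] using this
    have := hray w
    rw [hv1'] at this
    have h2 : μ * (w ⬝ᵥ w) ≤ lmax * (w ⬝ᵥ w) := by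
      rwa [dotProduct_smul, smul_eq_mul] at this
    exact le_of_mul_le_mul_right (by linarith [h2]) hpos
  have hmem : lmax ∈ spectrum ℝ A := hA.eigenvalues_mem_spectrum_real i0
  have hle : lmax ≤ sSup (spectrum ℝ A) := le_csSup ⟨lmax, fun μ hμ => hbdd μ hμ⟩ hmem
  have hxx : 0 ≤ x ⬝ᵥ x := by
    simpa [dotProduct] using Finset.sum_nonneg fun i _ => mul_self_nonneg (x i)
  calc x ⬝ᵥ (A *ᵥ x) ≤ lmax * (x ⬝ᵥ x) := hray x
    _ ≤ sSup (spectrum ℝ A) * (x ⬝ᵥ x) := mul_le_mul_of_nonneg_right hle hxx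

lemma hall_to_fpm (G : SimpleGraph V) [DecidableRel G.Adj]
    (hhall : ∀ A : Finset V, A.card ≤ (A.biUnion (fun v => G.neighborFinset v)).card) :
    HasFracPerfectMatching G := by
  obtain ⟨f, hfinj, hfmem⟩ :=
    (Finset.all_card_le_biUnion_card_iff_exists_injective (fun v => G.neighborFinset v)).mp hhall
  have hadj : ∀ v, G.Adj v (f v) := fun v => (G.mem_neighborFinset v (f v)).mp (hfmem v)
  have hfbij : Function.Bijective f := Finite.injective_iff_bijective.mp hfinj
  -- the fractional matching
  set F : Sym2 V → ℝ := fun e => ((Finset.univ.filter (fun v => s(v, f v) = e)).card : ℝ) / 2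
    with hF
  have hedge : ∀ v, s(v, f v) ∈ G.edgeFinset := by
    intro v
    rw [SimpleGraph.mem_edgeFinset]
    exact (hadj v)
  have hcard2 : ∀ e : Sym2 V, (Finset.univ.filter (fun v => s(v, f v) = e)).card ≤ 2 := by
    intro e
    refine Sym2.ind (fun a b => ?_) e
    have hsub : (Finset.univ.filter (fun v => s(v, f v) = s(a, b))) ⊆ {a, b} := by
      intro v hv
      rw [Finset.mem_filter] at hv
      rcases Sym2.eq_iff.mp hv.2 with ⟨h1, _⟩ | ⟨h1, _⟩ <;> simp [h1]
    calc _ ≤ ({a, b} : Finset V).card := Finset.card_le_card hsub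
      _ ≤ 2 := Finset.card_insert_le _ _ |>.trans (by simp)
  refine ⟨F, ⟨?_, ?_, ?_⟩, ?_⟩
  · intro e _
    constructor
    · positivity
    · rw [hF]
      have := hcard2 e
      simp only []
      rw [div_le_one (by norm_num)]
      exact_mod_cast this
  · intro e he
    rw [hF]
    simp only []
    have : (Finset.univ.filter (fun v => s(v, f v) = e)) = ∅ := by
      rw [Finset.filter_eq_empty_iff]
      intro v _
      intro hev
      exact he (hev ▸ hedge v)
    rw [this]
    simp
  · intro v
    -- sum over incident edges
    have hfib := Finset.card_eq_sum_card_fiberwise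
      (s := Finset.univ.filter (fun w => s(w, f w) ∈ G.incidenceFinset v))
      (t := G.incidenceFinset v) (f := fun w => s(w, f w))
      (fun w hw => (Finset.mem_filter.mp hw).2)
    have hsub : (Finset.univ.filter (fun w => s(w, f w) ∈ G.incidenceFinset v)).card ≤ 2 := by
      have : (Finset.univ.filter (fun w => s(w, f w) ∈ G.incidenceFinset v)) ⊆
          {v, Function.surjInv hfbij.2 v} := by
        intro w hw
        rw [Finset.mem_filter] at hw
        have hv := hw.2
        rw [SimpleGraph.mem_incidenceFinset] at hv
        have hv2 : v ∈ (s(w, f w) : Sym2 V) := hv.2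
        rcases Sym2.mem_iff.mp hv2 with h | h
        · simp [h.symm]
        · have : w = Function.surjInv hfbij.2 v := by
            apply hfinj
            rw [Function.surjInv_eq hfbij.2 v, h]
          simp [this]
      calc _ ≤ ({v, Function.surjInv hfbij.2 v} : Finset V).card := Finset.card_le_card this
        _ ≤ 2 := Finset.card_insert_le _ _ |>.trans (by simp)
    have heq : ∀ e ∈ G.incidenceFinset v,
        ((Finset.univ.filter (fun w => s(w, f w) ∈ G.incidenceFinset v)).filter
          (fun w => s(w, f w) = e)) = Finset.univ.filter (fun w => s(w, f w) = e) := by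
      intro e he
      ext w
      simp only [Finset.mem_filter, Finset.mem_univ, true_and]
      constructor
      · rintro ⟨_, h⟩; exact h
      · intro h; exact ⟨h ▸ he, h⟩
    calc ∑ e ∈ G.incidenceFinset v, F e
        = (∑ e ∈ G.incidenceFinset v,
            ((Finset.univ.filter (fun w => s(w, f w) = e)).card : ℝ)) / 2 := by
          rw [Finset.sum_div]
      _ ≤ 1 := by
          rw [div_le_one (by norm_num)]
          push_cast [← Nat.cast_sum]
          have : ∑ e ∈ G.incidenceFinset v, (Finset.univ.filter (fun w => s(w, f w) = e)).card
              = (Finset.univ.filter (fun w => s(w, f w) ∈ G.incidenceFinset v)).card := by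
            rw [hfib]
            exact Finset.sum_congr rfl fun e he => by rw [heq e he]
          rw [this]
          exact_mod_cast hsub
  · -- total sum
    have hfib := Finset.card_eq_sum_card_fiberwise
      (s := (Finset.univ : Finset V)) (t := G.edgeFinset) (f := fun w => s(w, f w))
      (fun w _ => hedge w)
    calc ∑ e ∈ G.edgeFinset, F e
        = (∑ e ∈ G.edgeFinset, ((Finset.univ.filter (fun w => s(w, f w) = e)).card : ℝ)) / 2 := by
          rw [Finset.sum_div]
      _ = (Fintype.card V : ℝ) / 2 := by
          congr 1
          rw [← Nat.cast_sum, ← hfib]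
          simp [Finset.card_univ]

lemma exists_indep_violator (G : SimpleGraph V) [DecidableRel G.Adj]
    (h : ∃ A : Finset V, (A.biUnion fun v => G.neighborFinset v).card < A.card) :
    ∃ I : Finset V, I.Nonempty ∧ (∀ u ∈ I, ∀ v ∈ I, ¬ G.Adj u v) ∧
      (I.biUnion fun v => G.neighborFinset v).card < I.card := by
  obtain ⟨A0, hA0⟩ := h
  obtain ⟨A, hAmem, hmin⟩ := Finset.exists_min_image
    (Finset.univ.filter fun B : Finset V =>
      (B.biUnion fun v => G.neighborFinset v).card < B.card)
    Finset.card ⟨A0, by simp [hA0]⟩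
  rw [Finset.mem_filter] at hAmem
  have hA : (A.biUnion fun v => G.neighborFinset v).card < A.card := hAmem.2
  set N := A.biUnion fun v => G.neighborFinset v with hN
  refine ⟨A, ?_, ?_, hA⟩
  · rw [← Finset.card_pos]; omega
  intro u hu v hv hadj
  have huv : u ≠ v := G.ne_of_adj hadj
  -- every subset of A.erase u satisfies Hall's condition
  have hsubHall : ∀ B : Finset V, B ⊆ A.erase u →
      B.card ≤ (B.biUnion fun w => G.neighborFinset w).card := by
    intro B hB
    by_contra hc
    push_neg at hc
    have : A.card ≤ B.card := hmin B (Finset.mem_filter.mpr ⟨Finset.mem_univ _, hc⟩)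
    have : B.card ≤ (A.erase u).card := Finset.card_le_card hB
    have := Finset.card_erase_of_mem hu
    have : 0 < A.card := Finset.card_pos.mpr ⟨u, hu⟩
    omega
  -- Hall's theorem on A.erase u
  have hHallCond : ∀ s : Finset {a // a ∈ A.erase u},
      s.card ≤ (s.biUnion fun a => G.neighborFinset ↑a).card := by
    intro s
    have h1 : (s.image Subtype.val).card = s.card :=
      Finset.card_image_of_injective _ Subtype.val_injective
    have h2 : (s.biUnion fun a => G.neighborFinset ↑a) =
        ((s.image Subtype.val).biUnion fun w => G.neighborFinset w) := by
      ext x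
      simp only [Finset.mem_biUnion, Finset.mem_image]
      constructor
      · rintro ⟨a, ha, hx⟩; exact ⟨↑a, ⟨a, ha, rfl⟩, hx⟩
      · rintro ⟨w, ⟨a, ha, rfl⟩, hx⟩; exact ⟨a, ha, hx⟩
    rw [h2, ← h1]
    exact hsubHall _ (fun x hx => by
      obtain ⟨a, _, rfl⟩ := Finset.mem_image.mp hx; exact a.2)
  obtain ⟨f, hfinj, hfmem⟩ :=
    (Finset.all_card_le_biUnion_card_iff_exists_injective
      (fun a : {a // a ∈ A.erase u} => G.neighborFinset ↑a)).mp hHallCond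
  -- the image of f is all of N
  set T := (A.erase u).attach.image f with hT
  have hTcard : T.card = A.card - 1 := by
    rw [hT, Finset.card_image_of_injective _ hfinj, Finset.card_attach,
      Finset.card_erase_of_mem hu]
  have hTN : T ⊆ N := by
    intro x hx
    obtain ⟨a, _, rfl⟩ := Finset.mem_image.mp hx
    exact Finset.mem_biUnion.mpr ⟨↑a, Finset.mem_of_mem_erase a.2, hfmem a⟩
  have hTeqN : T = N := by
    apply Finset.eq_of_subset_of_card_le hTN
    rw [hTcard]; omega
  -- the injection C → C.erase u
  set C := A ∩ N with hC
  have huC : u ∈ C := by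
    rw [hC, Finset.mem_inter]
    exact ⟨hu, Finset.mem_biUnion.mpr ⟨v, hv, (G.mem_neighborFinset v u).mpr hadj.symm⟩⟩
  classical
  have hinj : ∀ x ∈ C, ∃ a : {a // a ∈ A.erase u}, f a = x := by
    intro x hx
    have hxN : x ∈ N := (Finset.mem_inter.mp hx).2
    rw [← hTeqN, hT] at hxN
    obtain ⟨a, _, ha⟩ := Finset.mem_image.mp hxN
    exact ⟨a, ha⟩
  set φ : V → V := fun x => if h : ∃ a : {a // a ∈ A.erase u}, f a = x then ↑h.choose else x
    with hφ
  have hmap : ∀ x ∈ C, φ x ∈ C.erase u := by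
    intro x hx
    have hex := hinj x hx
    rw [hφ]
    simp only [dif_pos hex]
    set a := hex.choose with ha
    have hfa : f a = x := hex.choose_spec
    have hadj2 : G.Adj ↑a x := by
      have := hfmem a
      rw [hfa] at this
      exact (G.mem_neighborFinset _ _).mp this
    have haA : (a : V) ∈ A.erase u := a.2
    refine Finset.mem_erase.mpr ⟨(Finset.mem_erase.mp haA).1, ?_⟩
    rw [hC, Finset.mem_inter]
    refine ⟨Finset.mem_of_mem_erase haA, ?_⟩
    exact Finset.mem_biUnion.mpr ⟨x, (Finset.mem_inter.mp hx).1,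
      (G.mem_neighborFinset x ↑a).mpr hadj2.symm⟩
  have hinjOn : Set.InjOn φ C := by
    intro x1 hx1 x2 hx2 heq
    have h1 := hinj x1 hx1
    have h2 := hinj x2 hx2
    rw [hφ] at heq
    simp only [dif_pos h1, dif_pos h2] at heq
    have : h1.choose = h2.choose := Subtype.ext heq
    rw [← h1.choose_spec, ← h2.choose_spec, this]
  have hcard := Finset.card_le_card_of_injOn φ (fun x hx => hmap x hx) hinjOn
  rw [Finset.card_erase_of_mem huC] at hcard
  have : 0 < C.card := Finset.card_pos.mpr ⟨u, huC⟩
  omega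

lemma main_violator (G : SimpleGraph V) [DecidableRel G.Adj]
    (hq : sSup (spectrum ℝ (Matrix.diagonal (fun v => ((Gᶜ).degree v : ℝ)) + (Gᶜ).adjMatrix ℝ))
      < 2 * (G.minDegree : ℝ) + 1)
    (I : Finset V) (hIne : I.Nonempty) (hIindep : ∀ u ∈ I, ∀ v ∈ I, ¬ G.Adj u v)
    (hIviol : (I.biUnion fun v => G.neighborFinset v).card < I.card)
    (hray : ∀ x : V → ℝ, x ≠ 0 →
      dotProduct x ((Matrix.diagonal (fun v => ((Gᶜ).degree v : ℝ)) + (Gᶜ).adjMatrix ℝ).mulVec x) ≤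
        sSup (spectrum ℝ (Matrix.diagonal (fun v => ((Gᶜ).degree v : ℝ)) + (Gᶜ).adjMatrix ℝ)) *
          (dotProduct x x)) :
    ∃ S : Finset V, S.card = G.minDegree ∧ Sᶜ.card = G.minDegree + 1 ∧
      (∀ u ∈ Sᶜ, ∀ v ∈ Sᶜ, ¬ G.Adj u v) ∧
      (∀ u ∈ Sᶜ, ∀ v ∈ S, G.Adj u v) := by
  classical
  set S := I.biUnion fun v => G.neighborFinset v with hSdef
  set Q := Matrix.diagonal (fun v => ((Gᶜ).degree v : ℝ)) + (Gᶜ).adjMatrix ℝ with hQ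
  set n := Fintype.card V with hn
  set δ := G.minDegree with hδ
  -- basic facts
  have hsub : ∀ v ∈ I, G.neighborFinset v ⊆ S := by
    intro v hv w hw
    exact Finset.mem_biUnion.mpr ⟨v, hv, hw⟩
  have hdisj : ∀ w ∈ I, w ∉ S := by
    intro w hw hwS
    obtain ⟨v, hv, hvw⟩ := Finset.mem_biUnion.mp hwS
    exact hIindep v hv w hw ((G.mem_neighborFinset v w).mp hvw)
  have hdegle : ∀ v ∈ I, G.degree v ≤ S.card := by
    intro v hv
    exact Finset.card_le_card (hsub v hv)
  have hδs : δ ≤ S.card := by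
    obtain ⟨v, hv⟩ := hIne
    exact (G.minDegree_le_degree v).trans (hdegle v hv)
  have hns : I.card + S.card ≤ n := by
    have : (I ∪ S).card = I.card + S.card := by
      rw [Finset.card_union_of_disjoint]
      exact Finset.disjoint_left.mpr hdisj
    rw [← this, hn]
    exact (Finset.card_le_card (Finset.subset_univ _)).trans_eq (Finset.card_univ)
  have hn1 : 1 ≤ n := by
    obtain ⟨v, _⟩ := hIne
    rw [hn]
    exact Fintype.card_pos_iff.mpr ⟨v⟩
  -- degree in the complement
  have hdegc : ∀ v ∈ I, (n : ℝ) ≤ ((Gᶜ).degree v : ℝ) + S.card + 1 := by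
    intro v hv
    have h1 : (Gᶜ).degree v = n - 1 - G.degree v := G.degree_compl v
    have h2 : G.degree v < n := G.degree_lt_card_verts v
    have h3 : n ≤ (Gᶜ).degree v + G.degree v + 1 := by omega
    have h4 : (Gᶜ).degree v + G.degree v + 1 ≤ (Gᶜ).degree v + S.card + 1 := by
      have := hdegle v hv
      omega
    exact_mod_cast h3.trans h4
  -- the indicator vector
  set x : V → ℝ := fun v => if v ∈ I then 1 else 0 with hx
  have hx0 : x ≠ 0 := by
    obtain ⟨v, hv⟩ := hIne
    intro h
    have := congrFun h v
    rw [hx] at this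
    simp [hv] at this
  have hxx : dotProduct x x = I.card := by
    rw [dotProduct]
    rw [Finset.sum_congr rfl (fun v _ => show x v * x v = if v ∈ I then (1:ℝ) else 0 by
      rw [hx]; by_cases h : v ∈ I <;> simp [h])]
    rw [Finset.sum_ite_mem, Finset.univ_inter, Finset.sum_const, nsmul_eq_mul, mul_one]
  have hIcard_pos : 0 < I.card := Finset.card_pos.mpr hIne
  -- quadratic form computation
  have hxQx : dotProduct x (Q.mulVec x) =
      (∑ v ∈ I, ((Gᶜ).degree v : ℝ)) + I.card * (I.card - 1) := by
    rw [hQ, Matrix.add_mulVec, dotProduct_add]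
    congr 1
    · -- diagonal part
      rw [dotProduct]
      rw [Finset.sum_congr rfl (fun v _ => show
          x v * (Matrix.diagonal (fun v => ((Gᶜ).degree v : ℝ)) |>.mulVec x) v
            = if v ∈ I then ((Gᶜ).degree v : ℝ) else 0 by
        rw [Matrix.mulVec_diagonal, hx]; by_cases h : v ∈ I <;> simp [h])]
      rw [Finset.sum_ite_mem, Finset.univ_inter]
    · -- adjacency part
      rw [dotProduct]
      have hstep : ∀ v, x v * (((Gᶜ).adjMatrix ℝ).mulVec x) v
          = if v ∈ I then ((I.card : ℝ) - 1) else 0 := by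
        intro v
        by_cases h : v ∈ I
        · rw [hx]
          simp only [h, if_true, one_mul]
          rw [SimpleGraph.adjMatrix_mulVec_apply]
          have hset : (Gᶜ).neighborFinset v ∩ I = I.erase v := by
            ext u
            simp only [Finset.mem_inter, SimpleGraph.mem_neighborFinset, Finset.mem_erase,
              SimpleGraph.compl_adj]
            constructor
            · rintro ⟨⟨hne, _⟩, hu⟩; exact ⟨fun he => hne he.symm, hu⟩
            · rintro ⟨hne, hu⟩
              exact ⟨⟨fun he => hne he.symm, hIindep v h u hu⟩, hu⟩
          have : ∑ u ∈ (Gᶜ).neighborFinset v, x u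
              = ((((Gᶜ).neighborFinset v) ∩ I).card : ℝ) := by
            rw [hx]
            rw [Finset.sum_ite_mem]
            simp
          rw [this, hset, Finset.card_erase_of_mem h]
          have : 1 ≤ I.card := hIcard_pos
          push_cast [Nat.cast_sub this]
          ring
        · rw [hx]; simp [h]
      rw [Finset.sum_congr rfl (fun v _ => hstep v)]
      rw [Finset.sum_ite_mem, Finset.univ_inter, Finset.sum_const, nsmul_eq_mul]
  -- lower bound on the quadratic form
  have hlow : (I.card : ℝ) * (((n : ℝ) - 1 - S.card) + ((I.card : ℝ) - 1))
      ≤ dotProduct x (Q.mulVec x) := by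
    rw [hxQx]
    have h1 : (I.card : ℝ) * ((n : ℝ) - 1 - S.card) ≤ ∑ v ∈ I, ((Gᶜ).degree v : ℝ) := by
      calc (I.card : ℝ) * ((n : ℝ) - 1 - S.card)
          = ∑ _v ∈ I, ((n : ℝ) - 1 - S.card) := by
            rw [Finset.sum_const, nsmul_eq_mul]
        _ ≤ ∑ v ∈ I, ((Gᶜ).degree v : ℝ) := by
            apply Finset.sum_le_sum
            intro v hv
            have := hdegc v hv
            linarith
    nlinarith [h1]
  -- apply the Rayleigh bound
  have hbound := hray x hx0
  rw [hxx] at hbound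
  have hq1 : (I.card : ℝ) * (((n : ℝ) - 1 - S.card) + ((I.card : ℝ) - 1))
      < (2 * (δ : ℝ) + 1) * I.card := by
    calc (I.card : ℝ) * (((n : ℝ) - 1 - S.card) + ((I.card : ℝ) - 1))
        ≤ dotProduct x (Q.mulVec x) := hlow
      _ ≤ sSup (spectrum ℝ Q) * I.card := hbound
      _ < (2 * (δ : ℝ) + 1) * I.card := by
          apply mul_lt_mul_of_pos_right _ (by exact_mod_cast hIcard_pos)
          exact hq
  have hkey : ((n : ℝ) - 1 - S.card) + ((I.card : ℝ) - 1) < 2 * (δ : ℝ) + 1 := by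
    have hpos : (0:ℝ) < I.card := by exact_mod_cast hIcard_pos
    nlinarith [hq1]
  -- convert to a natural-number inequality
  have hnat : n + I.card < 2 * δ + 3 + S.card := by
    have : (n : ℝ) + I.card < 2 * (δ:ℝ) + 3 + S.card := by linarith
    exact_mod_cast this
  have heqs : I.card = δ + 1 ∧ S.card = δ ∧ n = I.card + S.card := by
    have hviol : S.card < I.card := hIviol
    omega
  obtain ⟨hIc, hSc, hnc⟩ := heqs
  -- Sᶜ = I
  have hIsub : I ⊆ Sᶜ := fun w hw => Finset.mem_compl.mpr (hdisj w hw)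
  have hScompl : Sᶜ.card = δ + 1 := by
    rw [Finset.card_compl, hSc, ← hn]
    omega
  have hIeq : I = Sᶜ := by
    apply Finset.eq_of_subset_of_card_le hIsub
    rw [hScompl, hIc]
  refine ⟨S, hSc, hScompl, ?_, ?_⟩
  · rw [← hIeq]; exact hIindep
  · rw [← hIeq]
    intro u hu v hv
    have hnbr : G.neighborFinset u = S := by
      apply Finset.eq_of_subset_of_card_le (hsub u hu)
      rw [hSc]
      calc δ ≤ G.degree u := G.minDegree_le_degree u
        _ = (G.neighborFinset u).card := rfl
    have : v ∈ G.neighborFinset u := hnbr ▸ hv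
    exact (G.mem_neighborFinset u v).mp this


end FPMAux

/-- If `G` is connected with minimum degree `δ` and `q₁(Gᶜ) < 2δ + 1`, then `G` has a
fractional perfect matching, unless `G ≅ H1 ∨ H2` where `H1` is an independent set
of `δ + 1` vertices and `H2` is an arbitrary graph on `δ` vertices. -/

theorem hasFracPerfectMatching_of_q1_compl_lt' {V : Type*} [Fintype V] [DecidableEq V]
    (G : SimpleGraph V) [DecidableRel G.Adj] (hconn : G.Connected)
    (hq : q1 Gᶜ < 2 * (G.minDegree : ℝ) + 1) :
    HasFracPerfectMatching G ∨
      ∃ S : Finset V, S.card = G.minDegree ∧ Sᶜ.card = G.minDegree + 1 ∧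
        (∀ u ∈ Sᶜ, ∀ v ∈ Sᶜ, ¬ G.Adj u v) ∧
        (∀ u ∈ Sᶜ, ∀ v ∈ S, G.Adj u v) := by
  classical
  by_cases hhall : ∀ A : Finset V, A.card ≤ (A.biUnion fun v => G.neighborFinset v).card
  · exact Or.inl (hall_to_fpm G hhall)
  · right
    push_neg at hhall
    obtain ⟨A, hA⟩ := hhall
    obtain ⟨I, hIne, hIindep, hIviol⟩ := exists_indep_violator G ⟨A, hA⟩
    have hherm : (Matrix.diagonal (fun v => ((Gᶜ).degree v : ℝ)) + (Gᶜ).adjMatrix ℝ).IsHermitian :=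
      signlessLap_isHermitian' Gᶜ
    have hray : ∀ x : V → ℝ, x ≠ 0 →
        dotProduct x
          ((Matrix.diagonal (fun v => ((Gᶜ).degree v : ℝ)) + (Gᶜ).adjMatrix ℝ).mulVec x) ≤
          sSup (spectrum ℝ (Matrix.diagonal (fun v => ((Gᶜ).degree v : ℝ)) + (Gᶜ).adjMatrix ℝ)) *
            (dotProduct x x) :=
      fun x hx => dotProduct_mulVec_le_sSup _ hherm x hx
    exact main_violator G hq I hIne hIindep hIviol hray
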